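/- The AGM iteration is invariant under one step: for a ≥ b > 0, ∫₀^{π/2} dφ / √(a² cos²φ + b² sin²φ) = ∫₀^{π/2} dφ / √(a₁² cos²φ + b₁² sin²φ), where a₁ = (a+b)/2 and b₁ = √(ab). -/

import Mathlib

open Real

lemma aux_sqrt1 (a b s c : ℝ) (hb : 0 < b) (hab : b ≤ a) (hs1 : s^2 ≤ 1)
    (hc : 0 ≤ c) (hcs : c^2 = 1 - s^2) :
    Real.sqrt (1 - (2*a*s/(a+b+(a-b)*s^2))^2)
      = c * Real.sqrt ((a+b)^2 - (a-b)^2*s^2) / (a+b+(a-b)*s^2) := by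
  have ha : 0 < a := lt_of_lt_of_le hb hab
  have hD : 0 < a+b+(a-b)*s^2 := by nlinarith [sq_nonneg s]
  have hQ : 0 < (a+b)^2 - (a-b)^2*s^2 := by nlinarith [mul_pos ha hb]
  have h1 : 1 - (2*a*s/(a+b+(a-b)*s^2))^2
      = (c * Real.sqrt ((a+b)^2 - (a-b)^2*s^2) / (a+b+(a-b)*s^2))^2 := by
    have hq : Real.sqrt ((a+b)^2 - (a-b)^2*s^2) ^ 2 = (a+b)^2 - (a-b)^2*s^2 :=
      Real.sq_sqrt hQ.le
    rw [div_pow, div_pow, mul_pow c, hq, hcs, eq_div_iff (by positivity), sub_mul,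
      div_mul_cancel₀ _ (by positivity)]
    ring
  rw [h1, Real.sqrt_sq (by positivity)]

lemma aux_derivval (a b s c : ℝ) (hb : 0 < b) (hab : b ≤ a) (hs1 : s^2 ≤ 1)
    (hc : 0 < c) (hcs : c^2 = 1 - s^2) :
    2*a*(a+b-(a-b)*s^2) / ((a+b+(a-b)*s^2) * Real.sqrt ((a+b)^2 - (a-b)^2*s^2))
      = 1 / Real.sqrt (1 - (2*a*s/(a+b+(a-b)*s^2))^2) *
        ((2*a*c*(a+b+(a-b)*s^2) - 2*a*s*((a-b)*(2*s*c))) / (a+b+(a-b)*s^2)^2) := by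
  have ha : 0 < a := lt_of_lt_of_le hb hab
  have hD : 0 < a+b+(a-b)*s^2 := by nlinarith [sq_nonneg s]
  have hQ : 0 < (a+b)^2 - (a-b)^2*s^2 := by nlinarith [mul_pos ha hb]
  have hq : 0 < Real.sqrt ((a+b)^2 - (a-b)^2*s^2) := Real.sqrt_pos.2 hQ
  rw [aux_sqrt1 a b s c hb hab hs1 hc.le hcs]
  field_simp
  ring

lemma aux_integrand (a b s c : ℝ) (hb : 0 < b) (hab : b ≤ a) (hs1 : s^2 ≤ 1)
    (hc : 0 ≤ c) (hcs : c^2 = 1 - s^2) :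
    2*a*(a+b-(a-b)*s^2) / ((a+b+(a-b)*s^2) * Real.sqrt ((a+b)^2 - (a-b)^2*s^2)) *
      (1 / Real.sqrt (a^2 * (1 - (2*a*s/(a+b+(a-b)*s^2))^2)
          + b^2 * (2*a*s/(a+b+(a-b)*s^2))^2))
      = 1 / Real.sqrt (((a+b)/2)^2 * c^2 + (a*b) * s^2) := by
  have ha : 0 < a := lt_of_lt_of_le hb hab
  have hD : 0 < a+b+(a-b)*s^2 := by nlinarith [sq_nonneg s]
  have hQ : 0 < (a+b)^2 - (a-b)^2*s^2 := by nlinarith [mul_pos ha hb]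
  have hE : 0 < a+b-(a-b)*s^2 := by nlinarith [sq_nonneg s]
  have hq : 0 < Real.sqrt ((a+b)^2 - (a-b)^2*s^2) := Real.sqrt_pos.2 hQ
  have h1 : a^2 * (1 - (2*a*s/(a+b+(a-b)*s^2))^2) + b^2 * (2*a*s/(a+b+(a-b)*s^2))^2
      = (a*(a+b-(a-b)*s^2)/(a+b+(a-b)*s^2))^2 := by
    have hD2 : (a+b+(a-b)*s^2)^2 ≠ 0 := by positivity
    rw [div_pow, div_pow, eq_div_iff hD2]
    have e : (2*a*s)^2/(a+b+(a-b)*s^2)^2*(a+b+(a-b)*s^2)^2 = (2*a*s)^2 := div_mul_cancel₀ _ hD2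
    linear_combination (b^2 - a^2) * e
  have h2 : ((a+b)/2)^2 * c^2 + (a*b) * s^2
      = (Real.sqrt ((a+b)^2 - (a-b)^2*s^2) / 2)^2 := by
    have h3 : (Real.sqrt ((a+b)^2 - (a-b)^2*s^2) / 2)^2
        = ((a+b)^2 - (a-b)^2*s^2)/4 := by
      rw [div_pow, Real.sq_sqrt hQ.le]; norm_num
    rw [h3]; nlinarith [hcs]
  rw [h1, h2, Real.sqrt_sq (by positivity), Real.sqrt_sq (by positivity)]
  field_simp

/-- Invariance of the elliptic integral under one step of the AGM iteration. -/
theorem agm_integral_invariant (a b : ℝ) (hb : 0 < b) (hab : b ≤ a) :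
    ∫ φ in (0:ℝ)..(π / 2),
        1 / Real.sqrt (a ^ 2 * Real.cos φ ^ 2 + b ^ 2 * Real.sin φ ^ 2)
      = ∫ φ in (0:ℝ)..(π / 2),
          1 / Real.sqrt (((a + b) / 2) ^ 2 * Real.cos φ ^ 2
            + Real.sqrt (a * b) ^ 2 * Real.sin φ ^ 2) := by
  have ha : 0 < a := lt_of_lt_of_le hb hab
  have hab0 : 0 < a + b := by linarith
  set D : ℝ → ℝ := fun φ => a + b + (a - b) * Real.sin φ ^ 2 with hDdef
  set Q : ℝ → ℝ := fun φ => (a + b) ^ 2 - (a - b) ^ 2 * Real.sin φ ^ 2 with hQdef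
  set g : ℝ → ℝ := fun φ => Real.arcsin (2 * a * Real.sin φ / D φ) with hgdef
  set g' : ℝ → ℝ := fun φ =>
    2 * a * (a + b - (a - b) * Real.sin φ ^ 2) / (D φ * Real.sqrt (Q φ)) with hg'def
  set f : ℝ → ℝ := fun ψ =>
    1 / Real.sqrt (a ^ 2 * Real.cos ψ ^ 2 + b ^ 2 * Real.sin ψ ^ 2) with hfdef
  have hs1 : ∀ φ : ℝ, Real.sin φ ^ 2 ≤ 1 := fun φ => Real.sin_sq_le_one φ
  have hD : ∀ φ : ℝ, 0 < D φ := by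
    intro φ; simp only [hDdef]; nlinarith [sq_nonneg (Real.sin φ)]
  have hQ : ∀ φ : ℝ, 0 < Q φ := by
    intro φ; simp only [hQdef]; nlinarith [mul_pos ha hb, hs1 φ]
  have hsqQ : ∀ φ : ℝ, 0 < Real.sqrt (Q φ) := fun φ => Real.sqrt_pos.2 (hQ φ)
  have hden : ∀ ψ : ℝ, 0 < a ^ 2 * Real.cos ψ ^ 2 + b ^ 2 * Real.sin ψ ^ 2 := by
    intro ψ
    have h1 : Real.sin ψ ^ 2 + Real.cos ψ ^ 2 = 1 := Real.sin_sq_add_cos_sq ψ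
    have hba : b ^ 2 ≤ a ^ 2 := by nlinarith
    nlinarith [sq_nonneg (Real.cos ψ), mul_pos hb hb]
  have hDcont : Continuous D := by fun_prop
  have hgcont : Continuous g := by
    apply Real.continuous_arcsin.comp
    exact (continuous_const.mul Real.continuous_sin).div hDcont fun x => (hD x).ne'
  have hg'cont : Continuous g' := by
    apply Continuous.div (by fun_prop)
    · exact hDcont.mul (Real.continuous_sqrt.comp (by fun_prop))
    · intro x
      exact (mul_pos (hD x) (hsqQ x)).ne'
  have hfcont : Continuous f := by
    apply Continuous.div continuous_const
    · exact Real.continuous_sqrt.comp (by fun_prop)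
    · intro x
      exact (Real.sqrt_pos.2 (hden x)).ne'
  -- derivative of g on the open interval
  have hgderiv : ∀ x ∈ Set.Ioo (0:ℝ) (π / 2), HasDerivAt g (g' x) x := by
    intro x hx
    have hsx : 0 < Real.sin x := Real.sin_pos_of_pos_of_lt_pi hx.1
      (lt_trans hx.2 (by linarith [Real.pi_pos]))
    have hcx : 0 < Real.cos x := Real.cos_pos_of_mem_Ioo
      ⟨by linarith [Real.pi_pos, hx.1], hx.2⟩
    have hcs : Real.cos x ^ 2 = 1 - Real.sin x ^ 2 := Real.cos_sq' x
    have hslt1 : Real.sin x < 1 := by nlinarith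
    have hnum : 2 * a * Real.sin x < D x := by
      have h0 : (a - b) * Real.sin x ≤ (a - b) * 1 :=
        mul_le_mul_of_nonneg_left hslt1.le (by linarith)
      have h1 : 0 < (1 - Real.sin x) * (a + b - (a - b) * Real.sin x) :=
        mul_pos (by linarith) (by linarith)
      simp only [hDdef]; nlinarith
    have hwlt : 2 * a * Real.sin x / D x < 1 := (div_lt_one (hD x)).2 hnum
    have hwpos : 0 < 2 * a * Real.sin x / D x := div_pos (by positivity) (hD x)
    have hD' : HasDerivAt D ((a - b) * (2 * Real.sin x * Real.cos x)) x := by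
      have h1 : HasDerivAt (fun φ => Real.sin φ ^ 2)
          (2 * Real.sin x * Real.cos x) x := by
        simpa using (Real.hasDerivAt_sin x).fun_pow 2
      simpa [hDdef] using (h1.const_mul (a - b)).const_add (a + b)
    have hw : HasDerivAt (fun φ => 2 * a * Real.sin φ / D φ)
        ((2 * a * Real.cos x * D x -
          2 * a * Real.sin x * ((a - b) * (2 * Real.sin x * Real.cos x))) / D x ^ 2) x :=
      ((Real.hasDerivAt_sin x).const_mul (2 * a)).div hD' (hD x).ne'
    have harc := (Real.hasDerivAt_arcsin (by linarith : 2 * a * Real.sin x / D x ≠ -1)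
      (ne_of_lt hwlt)).comp x hw
    refine harc.congr_deriv ?_
    symm
    simp only [hg'def, hDdef, hQdef]
    have := aux_derivval a b (Real.sin x) (Real.cos x) hb hab (hs1 x) hcx hcs
    convert this using 3 <;> ring
  have h0 : g 0 = 0 := by simp [hgdef]
  have hpi2 : g (π / 2) = π / 2 := by
    have hD2 : D (π / 2) = 2 * a := by simp [hDdef]; ring
    simp only [hgdef, hD2, Real.sin_pi_div_two, mul_one]
    rw [div_self (by positivity)]
    exact Real.arcsin_one
  have hle : (0:ℝ) ≤ π / 2 := by linarith [Real.pi_pos]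
  have hsub := intervalIntegral.integral_comp_smul_deriv'' (a := (0:ℝ)) (b := π / 2)
    (f := g) (f' := g') (g := f)
    hgcont.continuousOn
    (by
      intro x hx
      rw [min_eq_left hle, max_eq_right hle] at hx
      exact (hgderiv x hx).hasDerivWithinAt)
    hg'cont.continuousOn
    hfcont.continuousOn
  rw [h0, hpi2] at hsub
  have hab' : Real.sqrt (a * b) ^ 2 = a * b := Real.sq_sqrt (by positivity)
  rw [hfdef] at hsub
  rw [← hsub]
  apply intervalIntegral.integral_congr
  intro φ hφ
  rw [Set.uIcc_of_le hle] at hφ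
  have hcs : Real.cos φ ^ 2 = 1 - Real.sin φ ^ 2 := Real.cos_sq' φ
  have hsφ : 0 ≤ Real.sin φ := Real.sin_nonneg_of_nonneg_of_le_pi hφ.1
    (le_trans hφ.2 (by linarith [Real.pi_pos]))
  have hcφ : 0 ≤ Real.cos φ := Real.cos_nonneg_of_mem_Icc
    ⟨by linarith [Real.pi_pos, hφ.1], hφ.2⟩
  have hw1 : 2 * a * Real.sin φ / D φ ≤ 1 := by
    rw [div_le_one (hD φ)]
    have hsle : Real.sin φ ≤ 1 := Real.sin_le_one φ
    have h0' : (a - b) * Real.sin φ ≤ (a - b) * 1 :=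
      mul_le_mul_of_nonneg_left hsle (by linarith)
    have h1' : 0 ≤ (1 - Real.sin φ) * (a + b - (a - b) * Real.sin φ) :=
      mul_nonneg (by linarith) (by linarith)
    simp only [hDdef]; nlinarith
  have hw0 : 0 ≤ 2 * a * Real.sin φ / D φ := div_nonneg (by positivity) (hD φ).le
  have hw2 : 0 ≤ 1 - (2 * a * Real.sin φ / D φ) ^ 2 := by nlinarith
  simp only [smul_eq_mul, Function.comp_apply, hgdef]
  rw [Real.cos_arcsin, Real.sin_arcsin (by linarith) hw1, Real.sq_sqrt hw2, hab']
  simp only [hg'def, hDdef, hQdef]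
  have := aux_integrand a b (Real.sin φ) (Real.cos φ) hb hab (hs1 φ) hcφ hcs
  convert this using 3 <;> ring
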